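/- Let G be a connected undirected graph with a vertex r, and consider the block-cut tree of G rooted at the block containing r. Let H be a block corresponding to a leaf node, with articulation vertex r' (or any vertex r' = r if G is 2-connected). If P0 is a simple path in G from r to r' whose internal vertices avoid V(H) \ {r'}, and P1 is a maximal path of H starting at r', then the concatenation P0·P1 is a maximal path of G starting at r. -/

import Mathlib

theorem stmt11 {V : Type} [Fintype V] (G : SimpleGraph V) (hconn : G.Connected)
    (H : Set V) (r r' x : V) (hr' : r' ∈ H) (hrH : r ∉ H \ {r'})
    -- H is a leaf block, attached to the rest of G only through the cut vertex r'
    (hattach : ∀ a b : V, G.Adj a b → a ∈ H → a ≠ r' → b ∈ H)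
    (hHedge : ∃ y ∈ H, G.Adj r' y)
    -- P0 : a simple path from r to r' whose internal vertices avoid H \ {r'}
    (p0 : G.Walk r r') (hp0 : p0.IsPath)
    (hp0int : ∀ v ∈ p0.support, v ∈ H → v = r')
    -- P1 : a maximal path of H starting at r', ending at x
    (p1 : G.Walk r' x) (hp1 : p1.IsPath)
    (hp1H : ∀ v ∈ p1.support, v ∈ H)
    (hp1max : ∀ y ∈ H, G.Adj x y → y ∈ p1.support) :
    -- the concatenation P0·P1 is a maximal path of G starting at r
    (p0.append p1).IsPath ∧ ∀ y : V, G.Adj x y → y ∈ (p0.append p1).support := by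
  constructor
  · rw [SimpleGraph.Walk.isPath_def, SimpleGraph.Walk.support_append]
    refine List.Nodup.append hp0.support_nodup (hp1.support_nodup.tail) ?_
    intro v hv0 hv1
    have hvH : v ∈ H := hp1H v (List.mem_of_mem_tail hv1)
    have hvr' : v = r' := hp0int v hv0 hvH
    subst hvr'
    have := hp1.support_nodup
    rw [SimpleGraph.Walk.support_eq_cons] at this
    exact (List.nodup_cons.mp this).1 hv1
  · intro y hxy
    have hyH : y ∈ H := by
      by_contra hy
      have hxr' : x = r' := by
        by_contra hxr
        exact hy (hattach x y hxy (hp1H x p1.end_mem_support) hxr)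
      subst hxr'
      have := SimpleGraph.Walk.isPath_iff_eq_nil.mp hp1
      subst this
      obtain ⟨z, hzH, hz⟩ := hHedge
      have := hp1max z hzH hz
      simp only [SimpleGraph.Walk.support_nil, List.mem_singleton] at this
      subst this
      exact G.loopless.irrefl _ hz
    have := hp1max y hyH hxy
    rw [SimpleGraph.Walk.mem_support_append_iff]
    exact Or.inr this
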